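/- Suppose U ⊆ [0,1]^n is convex, compact, and monotone (u ∈ U and 0 ≤ v ≤ u implies v ∈ U), with max{u_i : u ∈ U} = 1 for each i. Let v maximize ∑ log(u_i) over U and set c_i = 1/(n·v_i). Then 1/n ≤ c_i ≤ 1 for each i, U ⊆ U' := {u : ∑ c_i u_i ≤ 1, 0 ≤ u_i ≤ 1}, and v also maximizes ∑ log(u_i) over U'. -/

import Mathlib

open Real Set

lemma key_ineq (n : ℕ) (U : Set (Fin n → ℝ))
    (hconv : Convex ℝ U)
    (v : Fin n → ℝ) (hvU : v ∈ U) (hvpos : ∀ i, 0 < v i)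
    (hvmax : ∀ u ∈ U, (∀ i, 0 < u i) →
      ∑ i, Real.log (u i) ≤ ∑ i, Real.log (v i))
    (u : Fin n → ℝ) (huU : u ∈ U) (hupos : ∀ i, 0 ≤ u i) :
    ∑ i, u i / v i ≤ (n : ℝ) := by
  set f : ℝ → ℝ := fun t => ∑ i, Real.log (v i + t * (u i - v i)) with hf
  set D : ℝ := ∑ i, (u i - v i) / v i with hD
  have hderiv : HasDerivAt f D 0 := by
    rw [hf, hD]
    apply HasDerivAt.fun_sum
    intro i _
    have h1 : HasDerivAt (fun t : ℝ => v i + t * (u i - v i)) (u i - v i) 0 := by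
      simpa using ((hasDerivAt_id (0 : ℝ)).mul_const (u i - v i)).const_add (v i)
    have h2 := h1.log (by simpa using (hvpos i).ne')
    simpa using h2
  have hmaxon : IsMaxOn f (Icc (0 : ℝ) (1/2)) 0 := by
    intro t ht
    simp only [mem_Icc] at ht
    have hw : (fun i => v i + t * (u i - v i)) ∈ U := by
      have := hconv hvU huU (by linarith : (0:ℝ) ≤ 1 - t) (by linarith : (0:ℝ) ≤ t)
        (by ring)
      convert this using 1
      funext i
      simp [Pi.add_apply, Pi.smul_apply, smul_eq_mul]
      ring
    have hwpos : ∀ i, 0 < v i + t * (u i - v i) := by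
      intro i
      have h1 : v i + t * (u i - v i) = (1 - t) * v i + t * u i := by ring
      have h2 : 0 < (1 - t) * v i := by
        apply mul_pos (by linarith) (hvpos i)
      have h3 : 0 ≤ t * u i := mul_nonneg ht.1 (hupos i)
      linarith
    have := hvmax _ hw hwpos
    simpa [f, mem_setOf_eq] using this
  have hcone : ((1:ℝ)/2) ∈ posTangentConeAt (Icc (0 : ℝ) (1/2)) 0 := by
    have : ((1:ℝ)/2 - 0) ∈ posTangentConeAt (Icc (0 : ℝ) (1/2)) 0 := by
      apply sub_mem_posTangentConeAt_of_segment_subset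
      rw [segment_eq_Icc (by norm_num : (0:ℝ) ≤ 1/2)]
    simpa using this
  have hnonpos := hmaxon.localize.hasFDerivWithinAt_nonpos
    hderiv.hasDerivWithinAt hcone
  have hDle : D ≤ 0 := by
    simp only [ContinuousLinearMap.smulRight_apply, ContinuousLinearMap.one_apply,
      ContinuousLinearMap.toSpanSingleton_apply, smul_eq_mul] at hnonpos
    linarith
  have hsplit : ∀ i : Fin n, (u i - v i) / v i = u i / v i - 1 := by
    intro i
    rw [sub_div, div_self (hvpos i).ne']
  rw [hD, Finset.sum_congr rfl (fun i _ => hsplit i), Finset.sum_sub_distrib] at hDle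
  simp at hDle
  linarith

theorem stmt_5 (n : ℕ) (hn : 1 ≤ n) (U : Set (Fin n → ℝ))
    (hconv : Convex ℝ U) (hcomp : IsCompact U)
    (hbox : ∀ u ∈ U, ∀ i, 0 ≤ u i ∧ u i ≤ 1)
    (hmono : ∀ u ∈ U, ∀ v : Fin n → ℝ, (∀ i, 0 ≤ v i ∧ v i ≤ u i) → v ∈ U)
    (hmax : ∀ i, ∃ u ∈ U, u i = 1)
    (v : Fin n → ℝ) (hvU : v ∈ U) (hvpos : ∀ i, 0 < v i)
    (hvmax : ∀ u ∈ U, (∀ i, 0 < u i) →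
      ∑ i, Real.log (u i) ≤ ∑ i, Real.log (v i))
    (c : Fin n → ℝ) (hc : ∀ i, c i = 1 / ((n : ℝ) * v i)) :
    (∀ i, 1/(n : ℝ) ≤ c i ∧ c i ≤ 1) ∧
    U ⊆ {u : Fin n → ℝ | (∀ i, 0 ≤ u i ∧ u i ≤ 1) ∧ ∑ i, c i * u i ≤ 1} ∧
    (∀ u : Fin n → ℝ, ((∀ i, 0 ≤ u i ∧ u i ≤ 1) ∧ ∑ i, c i * u i ≤ 1) →
      (∀ i, 0 < u i) → ∑ i, Real.log (u i) ≤ ∑ i, Real.log (v i)) := by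
  have hnpos : (0:ℝ) < n := by exact_mod_cast hn
  have key : ∀ u ∈ U, ∑ i, u i / v i ≤ (n : ℝ) := fun u huU =>
    key_ineq n U hconv v hvU hvpos hvmax u huU (fun i => (hbox u huU i).1)
  -- v i ≥ 1/n
  have hvlow : ∀ i, 1 / (n : ℝ) ≤ v i := by
    intro i
    obtain ⟨u, huU, hui⟩ := hmax i
    have hle := key u huU
    have hterm : u i / v i ≤ ∑ j, u j / v j := by
      apply Finset.single_le_sum (f := fun j => u j / v j)
      · intro j _
        exact div_nonneg (hbox u huU j).1 (hvpos j).le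
      · exact Finset.mem_univ i
    rw [hui] at hterm
    have h1 : 1 / v i ≤ (n : ℝ) := le_trans hterm hle
    rw [div_le_iff₀ (hvpos i)] at h1
    rw [div_le_iff₀ hnpos]
    linarith [mul_comm (n:ℝ) (v i)]
  refine ⟨?_, ?_, ?_⟩
  · intro i
    have hv1 : v i ≤ 1 := (hbox v hvU i).2
    have hvp := hvpos i
    constructor
    · rw [hc i]
      apply one_div_le_one_div_of_le (by positivity)
      have : v i ≤ 1 := hv1
      nlinarith
    · rw [hc i]
      rw [div_le_one (by positivity)]
      have := hvlow i
      rw [div_le_iff₀ hnpos] at this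
      linarith [mul_comm (v i) (n:ℝ)]
  · intro u huU
    refine ⟨hbox u huU, ?_⟩
    have hle := key u huU
    have heq : ∀ i : Fin n, c i * u i = (u i / v i) / n := by
      intro i
      rw [hc i]
      field_simp
    rw [Finset.sum_congr rfl (fun i _ => heq i), ← Finset.sum_div]
    rw [div_le_one hnpos]
    exact hle
  · rintro u ⟨hbox', hsum⟩ hupos
    have hle : ∑ i, u i / v i ≤ (n : ℝ) := by
      have heq : ∀ i : Fin n, c i * u i = (u i / v i) / n := by
        intro i
        rw [hc i]
        field_simp
      rw [Finset.sum_congr rfl (fun i _ => heq i), ← Finset.sum_div,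
        div_le_one hnpos] at hsum
      exact hsum
    have hlog : ∀ i : Fin n, Real.log (u i) - Real.log (v i) ≤ u i / v i - 1 := by
      intro i
      have h1 := Real.log_le_sub_one_of_pos (div_pos (hupos i) (hvpos i))
      rwa [Real.log_div (hupos i).ne' (hvpos i).ne'] at h1
    calc ∑ i, Real.log (u i)
        = ∑ i, Real.log (v i) + ∑ i, (Real.log (u i) - Real.log (v i)) := by
          rw [← Finset.sum_add_distrib]; congr 1; funext i; ring
      _ ≤ ∑ i, Real.log (v i) + ∑ i, (u i / v i - 1) := by
          have := Finset.sum_le_sum (fun i (_ : i ∈ Finset.univ) => hlog i)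
          linarith
      _ ≤ ∑ i, Real.log (v i) := by
          rw [Finset.sum_sub_distrib]
          simp
          linarith
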